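/- Let n, m be positive natural numbers and let 𝓔 : Matrix (Fin n) (Fin n) ℂ →ₗ[ℂ] Matrix (Fin m) (Fin m) ℂ be a linear map whose Choi matrix σ_𝓔 := ∑_{i,j} E_{ij} ⊗ 𝓔(E_{ij}) is positive semidefinite. Let r be the rank of σ_𝓔. Then r ≤ n·m and there exist matrices E_1, …, E_r ∈ Matrix (Fin m) (Fin n) ℂ such that 𝓔(A) = ∑_{i=1}^r E_i A E_i† for all A, and the Kraus operators are mutually orthogonal in the Hilbert–Schmidt inner product: trace(E_i† E_j) = 0 for i ≠ j. -/

import Mathlib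

open Matrix Kronecker ComplexOrder

/-- Canonical (minimal, orthogonal) Kraus form: if the Choi matrix of a linear map
`𝓔` is positive semidefinite, then its rank `r` satisfies `r ≤ n·m` and there is a
Kraus decomposition of `𝓔` with exactly `r` Kraus operators that are mutually
orthogonal in the Hilbert–Schmidt inner product. -/
theorem canonical_kraus (n m : ℕ) (hn : 0 < n) (hm : 0 < m)
    (𝓔 : Matrix (Fin n) (Fin n) ℂ →ₗ[ℂ] Matrix (Fin m) (Fin m) ℂ)
    (σ : Matrix (Fin n × Fin m) (Fin n × Fin m) ℂ)
    (hσ : σ = ∑ i : Fin n, ∑ j : Fin n,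
      (Matrix.single i j (1 : ℂ)) ⊗ₖ 𝓔 (Matrix.single i j (1 : ℂ)))
    (hpsd : σ.PosSemidef) :
    σ.rank ≤ n * m ∧
    ∃ E : Fin σ.rank → Matrix (Fin m) (Fin n) ℂ,
      (∀ A, 𝓔 A = ∑ i, E i * A * (E i)ᴴ) ∧
      (∀ i j, i ≠ j → ((E i)ᴴ * E j).trace = 0) := by
  classical
  have hH : σ.IsHermitian := hpsd.1
  set C : Matrix (Fin n × Fin m) (Fin n × Fin m) ℂ := (hH.eigenvectorUnitary : Matrix (Fin n × Fin m) (Fin n × Fin m) ℂ)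
    with hC
  set lam : Fin n × Fin m → ℝ := hH.eigenvalues with hlam
  have hln : ∀ k, 0 ≤ lam k := hpsd.eigenvalues_nonneg
  have hentry : ∀ p q, σ p q = ∑ k, (lam k : ℂ) * (C p k * (starRingEnd ℂ) (C q k)) := by
    intro p q
    conv_lhs => rw [hH.spectral_theorem, Unitary.conjStarAlgAut_apply, Matrix.mul_apply]
    simp only [Matrix.mul_diagonal, Matrix.star_apply, Function.comp_apply, RCLike.star_def]
    refine Finset.sum_congr rfl fun k _ => ?_
    show C p k * ((lam k : ℝ) : ℂ) * (starRingEnd ℂ) (C q k)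
      = (lam k : ℂ) * (C p k * (starRingEnd ℂ) (C q k))
    ring
  have hrank : Fintype.card {k // lam k ≠ 0} = σ.rank := hH.rank_eq_card_non_zero_eigs.symm
  let e : Fin σ.rank ≃ {k // lam k ≠ 0} := (Fintype.equivFinOfCardEq hrank).symm
  set E : Fin σ.rank → Matrix (Fin m) (Fin n) ℂ := fun t =>
    Matrix.of fun a b => (Real.sqrt (lam (e t)) : ℂ) * C (b, a) (e t) with hE
  have hEapp : ∀ t a b, E t a b = (Real.sqrt (lam (e t)) : ℂ) * C (b, a) (e t) := fun _ _ _ => rfl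
  -- key: σ as sum of rank-one pieces over nonzero eigenvalues
  have hkey : ∀ p q, σ p q = ∑ t : Fin σ.rank,
      ((Real.sqrt (lam (e t)) : ℂ) * C p (e t)) *
        (starRingEnd ℂ) ((Real.sqrt (lam (e t)) : ℂ) * C q (e t)) := by
    intro p q
    rw [hentry p q]
    set g : (Fin n × Fin m) → ℂ := fun k => (lam k : ℂ) * (C p k * (starRingEnd ℂ) (C q k))
      with hg
    have h2 : ∑ t : Fin σ.rank, g (e t) = ∑ k : {k // lam k ≠ 0}, g k :=
      Equiv.sum_comp e (fun k : {k // lam k ≠ 0} => g k)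
    have h3 : ∑ k : {k // lam k ≠ 0}, g (k : Fin n × Fin m)
        = ∑ k ∈ Finset.univ.filter (fun k => lam k ≠ 0), g k :=
      (Finset.sum_subtype _ (by simp) g).symm
    have h4 : ∑ k ∈ Finset.univ.filter (fun k => lam k ≠ 0), g k = ∑ k, g k :=
      Finset.sum_filter_of_ne (fun k _ hk => by
        intro h0
        apply hk
        rw [hg]
        simp [h0])
    rw [← h4, ← h3, ← h2]
    refine Finset.sum_congr rfl fun t _ => ?_
    simp only [_root_.map_mul, Complex.conj_ofReal, hg]
    have hs : (Real.sqrt (lam (e t)) : ℂ) * (Real.sqrt (lam (e t)) : ℂ) = (lam (e t) : ℂ) := by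
      rw [← Complex.ofReal_mul, Real.mul_self_sqrt (hln _)]
    rw [show ((Real.sqrt (lam (e t)) : ℂ) * C p (e t)) *
        ((Real.sqrt (lam (e t)) : ℂ) * (starRingEnd ℂ) (C q (e t)))
      = ((Real.sqrt (lam (e t)) : ℂ) * (Real.sqrt (lam (e t)) : ℂ)) *
        (C p (e t) * (starRingEnd ℂ) (C q (e t))) from by ring, hs]
  -- Choi entries
  have hchoi : ∀ (i j : Fin n) (a b : Fin m),
      σ (i, a) (j, b) = 𝓔 (Matrix.single i j (1 : ℂ)) a b := by
    intro i j a b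
    rw [hσ]
    simp [Matrix.sum_apply, Matrix.single, Matrix.kroneckerMap_apply, ite_and,
      Finset.sum_ite_eq, Finset.sum_ite_eq']
  -- Kraus on basis matrices
  have hunit : ∀ (i j : Fin n),
      𝓔 (Matrix.single i j (1 : ℂ)) = ∑ t, E t * Matrix.single i j (1 : ℂ) * (E t)ᴴ := by
    intro i j
    ext a b
    rw [← hchoi i j a b, hkey (i, a) (j, b), Matrix.sum_apply]
    refine Finset.sum_congr rfl fun t _ => ?_
    simp only [Matrix.mul_apply, Matrix.conjTranspose_apply, Matrix.single, Matrix.of_apply,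
      hEapp, ite_and, RCLike.star_def]
    simp [Finset.sum_ite_eq, Finset.mul_sum, Finset.sum_mul, mul_ite, ite_mul]
  constructor
  · simpa using σ.rank_le_card_width
  refine ⟨E, ?_, ?_⟩
  · intro A
    conv_lhs => rw [Matrix.matrix_eq_sum_single A]
    rw [map_sum]
    have step : ∀ i : Fin n, 𝓔 (∑ j, Matrix.single i j (A i j))
        = ∑ j, A i j • ∑ t, E t * Matrix.single i j (1 : ℂ) * (E t)ᴴ := by
      intro i
      rw [map_sum]
      refine Finset.sum_congr rfl fun j _ => ?_
      rw [← hunit, ← _root_.map_smul, smul_single, smul_eq_mul, mul_one]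
    rw [Finset.sum_congr rfl fun i _ => step i]
    have expand : ∀ t : Fin σ.rank, E t * A * (E t)ᴴ
        = ∑ i : Fin n, ∑ j : Fin n, A i j • (E t * Matrix.single i j (1 : ℂ) * (E t)ᴴ) := by
      intro t
      conv_lhs => rw [Matrix.matrix_eq_sum_single A]
      rw [Matrix.mul_sum, Matrix.sum_mul]
      refine Finset.sum_congr rfl fun i _ => ?_
      rw [Matrix.mul_sum, Matrix.sum_mul]
      refine Finset.sum_congr rfl fun j _ => ?_
      rw [show Matrix.single i j (A i j) = A i j • Matrix.single i j (1 : ℂ) from by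
        rw [smul_single, smul_eq_mul, mul_one]]
      rw [Matrix.mul_smul, Matrix.smul_mul]
    symm
    calc ∑ t, E t * A * (E t)ᴴ
        = ∑ t, ∑ i : Fin n, ∑ j : Fin n,
            A i j • (E t * Matrix.single i j (1 : ℂ) * (E t)ᴴ) :=
          Finset.sum_congr rfl fun t _ => expand t
      _ = ∑ i : Fin n, ∑ j : Fin n, ∑ t,
            A i j • (E t * Matrix.single i j (1 : ℂ) * (E t)ᴴ) := by
          rw [Finset.sum_comm]
          exact Finset.sum_congr rfl fun i _ => Finset.sum_comm
      _ = ∑ i : Fin n, ∑ j : Fin n,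
            A i j • ∑ t, E t * Matrix.single i j (1 : ℂ) * (E t)ᴴ := by
          simp [Finset.smul_sum]
  · intro i j hij
    have h1 : (star C) * C = 1 := by
      rw [hC]; exact Unitary.coe_star_mul_self _
    have hCC : ∀ k l : Fin n × Fin m,
        (∑ p, (starRingEnd ℂ) (C p k) * C p l) = if k = l then (1 : ℂ) else 0 := by
      intro k l
      have h2 : ((star C) * C) k l = (1 : Matrix (Fin n × Fin m) (Fin n × Fin m) ℂ) k l := by
        rw [h1]
      simpa [Matrix.mul_apply, Matrix.star_apply, RCLike.star_def, Matrix.one_apply] using h2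
    have hne : ((e i : {k // lam k ≠ 0}) : Fin n × Fin m) ≠ ((e j : {k // lam k ≠ 0}) : Fin n × Fin m) :=
      fun h => hij (e.injective (Subtype.coe_injective h))
    have ht : ((E i)ᴴ * E j).trace = ∑ b : Fin n, ∑ a : Fin m,
        (starRingEnd ℂ) (E i a b) * E j a b := by
      simp [Matrix.trace, Matrix.diag, Matrix.mul_apply, Matrix.conjTranspose_apply,
        RCLike.star_def]
    rw [ht]
    have hterm : ∀ (b : Fin n) (a : Fin m), (starRingEnd ℂ) (E i a b) * E j a b
        = ((Real.sqrt (lam (e i)) : ℂ) * (Real.sqrt (lam (e j)) : ℂ)) *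
          ((starRingEnd ℂ) (C (b, a) (e i)) * C (b, a) (e j)) := by
      intro b a
      simp only [hEapp, _root_.map_mul, Complex.conj_ofReal]
      ring
    simp only [hterm, ← Finset.mul_sum]
    have h5 : ∑ b : Fin n, ∑ a : Fin m,
        (starRingEnd ℂ) (C (b, a) (e i)) * C (b, a) (e j)
        = ∑ p : Fin n × Fin m, (starRingEnd ℂ) (C p (e i)) * C p (e j) :=
      (Fintype.sum_prod_type
        (f := fun p : Fin n × Fin m => (starRingEnd ℂ) (C p (e i)) * C p (e j))).symm
    rw [h5, hCC, if_neg hne, mul_zero]
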